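/- Let 1 ≤ u ≤ k−1 and let M_{k,u}^α be the quaternary MacDonald code of type α. Then for every r with u < r ≤ k: r_L(M_{k,u}^α) ≤ 4^k − 4^r + r_L(M_{r,u}^α), and 6·r_E(M_{k,u}^α) ≤ 11(4^k − 4^r) + 6·r_E(M_{r,u}^α). -/

import Mathlib

/-- The Lee weight on `ZMod 4`: `w_L(0)=0, w_L(1)=1, w_L(2)=2, w_L(3)=1`. -/
def leeWt (x : ZMod 4) : ℕ := min x.val (4 - x.val)

/-- The Euclidean weight on `ZMod 4`: `w_E(0)=0, w_E(1)=1, w_E(2)=4, w_E(3)=1`. -/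
def euclWt (x : ZMod 4) : ℕ := (min x.val (4 - x.val)) ^ 2

/-- The Lee distance between two vectors over `ZMod 4`. -/
def dLee {ι : Type*} [Fintype ι] (x y : ι → ZMod 4) : ℕ := ∑ i, leeWt (x i - y i)

/-- The Euclidean distance between two vectors over `ZMod 4`. -/
def dEucl {ι : Type*} [Fintype ι] (x y : ι → ZMod 4) : ℕ := ∑ i, euclWt (x i - y i)

/-- The covering radius of a code over `ZMod 4` with respect to the Lee distance. -/
noncomputable def covRadLee {ι : Type*} [Fintype ι] (C : Set (ι → ZMod 4)) : ℕ :=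
  sSup (Set.range fun u : ι → ZMod 4 => sInf (dLee u '' C))

/-- The covering radius of a code over `ZMod 4` with respect to the Euclidean distance. -/
noncomputable def covRadEucl {ι : Type*} [Fintype ι] (C : Set (ι → ZMod 4)) : ℕ :=
  sSup (Set.range fun u : ι → ZMod 4 => sInf (dEucl u '' C))

/-- The quaternary MacDonald code of type α, `M_{k,u}^α`: the `ZMod 4`-span of the rows of
the `k × (4^k - 4^u)` matrix whose columns are exactly all vectors of `(ZMod 4)^k` whose
first `k - u` coordinates are not all zero, each occurring once. Codewords are indexed by
these columns. -/
def macDonaldAlpha (k u : ℕ) :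
    Set ({v : Fin k → ZMod 4 // ∃ i : Fin k, (i : ℕ) < k - u ∧ v i ≠ 0} → ZMod 4) :=
  Set.range fun a : Fin k → ZMod 4 =>
    fun v : {v : Fin k → ZMod 4 // ∃ i : Fin k, (i : ℕ) < k - u ∧ v i ≠ 0} =>
      ∑ i, a i * v.1 i




lemma sum_zmod4 (g : ZMod 4 → ℕ) : ∑ c, g c = g 0 + g 1 + g 2 + g 3 := by
  show ∑ c : Fin 4, g c = _
  exact Fin.sum_univ_four _

lemma sum_sub_mul_unit (f : ZMod 4 → ℕ) (y e : ZMod 4) (he : e = 1 ∨ e = 3) :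
    ∑ c : ZMod 4, f (y - c * e) = ∑ c : ZMod 4, f c := by
  have hee : e * e = 1 := by rcases he with rfl | rfl <;> decide
  apply Fintype.sum_bijective (fun c : ZMod 4 => y - c * e) ?_ _ _ (fun _ => rfl)
  rw [Function.bijective_iff_has_inverse]
  refine ⟨fun z => (y - z) * e, fun c => ?_, fun z => ?_⟩
  · show (y - (y - c * e)) * e = c
    rw [sub_sub_cancel, mul_assoc, hee, mul_one]
  · show y - (y - z) * e * e = z
    rw [mul_assoc, hee, mul_one, sub_sub_cancel]

lemma sum_sub_mul_two (f : ZMod 4 → ℕ) (y : ZMod 4) :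
    ∑ c : ZMod 4, f (y - c * 2) = 2 * f y + 2 * f (y + 2) := by
  rw [sum_zmod4 (fun c => f (y - c * 2))]
  have e0 : y - 0 * 2 = y := by rw [zero_mul, sub_zero]
  have e1 : y - 1 * 2 = y + 2 := by rw [one_mul, sub_eq_add_neg, show (-2 : ZMod 4) = 2 by decide]
  have e2 : y - 2 * 2 = y := by rw [show (2 : ZMod 4) * 2 = 0 by decide, sub_zero]
  have e3 : y - 3 * 2 = y + 2 := by rw [show (3 : ZMod 4) * 2 = 2 by decide, sub_eq_add_neg,
    show (-2 : ZMod 4) = 2 by decide]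
  rw [e0, e1, e2, e3]
  omega

lemma lee_unit (y e : ZMod 4) (he : e = 1 ∨ e = 3) : ∑ c : ZMod 4, leeWt (y - c * e) ≤ 4 := by
  rw [sum_sub_mul_unit _ _ _ he, sum_zmod4]
  decide

lemma lee_two (y : ZMod 4) : ∑ c : ZMod 4, leeWt (y - c * 2) ≤ 4 + 0 := by
  rw [sum_sub_mul_two]
  have : leeWt y + leeWt (y + 2) = 2 := by revert y; decide
  omega

lemma eucl_unit (y e : ZMod 4) (he : e = 1 ∨ e = 3) : ∑ c : ZMod 4, euclWt (y - c * e) ≤ 6 := by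
  rw [sum_sub_mul_unit _ _ _ he, sum_zmod4]
  decide

lemma eucl_two (y : ZMod 4) : ∑ c : ZMod 4, euclWt (y - c * 2) ≤ 6 + 2 := by
  rw [sum_sub_mul_two]
  have : euclWt y + euclWt (y + 2) ≤ 4 := by revert y; decide
  omega

lemma zmod4_cases (z : ZMod 4) : z = 0 ∨ z = 1 ∨ z = 2 ∨ z = 3 := by revert z; decide

-- covering radius helpers
lemma covRad_le_of {ι : Type*} [Fintype ι] (C : Set (ι → ZMod 4)) (M : ℕ)
    (hM : ∀ x : ι → ZMod 4, sInf (dLee x '' C) ≤ M) : covRadLee C ≤ M := by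
  apply csSup_le (Set.range_nonempty _)
  rintro _ ⟨x, rfl⟩
  exact hM x

lemma leeWt_le (z : ZMod 4) : leeWt z ≤ 2 := by revert z; decide

lemma sInf_le_covRadLee {ι : Type*} [Fintype ι] (C : Set (ι → ZMod 4)) (c₀ : ι → ZMod 4)
    (hc₀ : c₀ ∈ C) (x : ι → ZMod 4) : sInf (dLee x '' C) ≤ covRadLee C := by
  have hbdd : BddAbove (Set.range fun y : ι → ZMod 4 => sInf (dLee y '' C)) := by
    refine ⟨2 * Fintype.card ι, ?_⟩
    rintro _ ⟨y, rfl⟩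
    refine (Nat.sInf_le (Set.mem_image_of_mem _ hc₀)).trans ?_
    calc dLee y c₀ ≤ ∑ _i : ι, 2 := Finset.sum_le_sum fun i _ => leeWt_le _
      _ = 2 * Fintype.card ι := by simp [Finset.sum_const, mul_comm]
  exact le_csSup hbdd ⟨x, rfl⟩


lemma key (m : ℕ) (f : ZMod 4 → ℕ) (h : Fin m → ZMod 4) (i0 : Fin m) (T : ℕ)
    (hT : ∀ t : ZMod 4, (∑ c : ZMod 4, f (t + c * h i0)) ≤ T) :
    ∑ b : Fin m → ZMod 4, f (∑ i, b i * h i) ≤ 4 ^ (m - 1) * T := by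
  classical
  have hm : 1 ≤ m := i0.pos
  -- the shift bijection
  have hbij : ∀ d : ZMod 4, Function.Bijective
      (fun b : Fin m → ZMod 4 => Function.update b i0 (b i0 + d)) := by
    intro d
    rw [Function.bijective_iff_has_inverse]
    refine ⟨fun b => Function.update b i0 (b i0 - d), fun b => ?_, fun b => ?_⟩ <;>
    · funext j
      by_cases hj : j = i0
      · subst hj; simp
      · simp [Function.update_of_ne hj]
  have hL : ∀ (d : ZMod 4) (b : Fin m → ZMod 4),
      (∑ i, (Function.update b i0 (b i0 + d)) i * h i) = (∑ i, b i * h i) + d * h i0 := by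
    intro d b
    have h1 : ∑ i, (Function.update b i0 (b i0 + d)) i * h i
        = ∑ i ∈ Finset.univ \ {i0}, b i * h i + (b i0 + d) * h i0 := by
      rw [Finset.sum_eq_sum_sdiff_singleton_add (Finset.mem_univ i0)]
      simp only [Function.update_self]
      congr 1
      apply Finset.sum_congr rfl
      intro j hj
      rw [Finset.mem_sdiff, Finset.mem_singleton] at hj
      rw [Function.update_of_ne hj.2]
    have h2 : ∑ i, b i * h i = ∑ i ∈ Finset.univ \ {i0}, b i * h i + b i0 * h i0 :=
      Finset.sum_eq_sum_sdiff_singleton_add (Finset.mem_univ i0) _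
    rw [h1, h2]; ring
  have hmain : 4 * ∑ b : Fin m → ZMod 4, f (∑ i, b i * h i)
      ≤ 4 ^ m * T := by
    have e1 : ∀ d : ZMod 4, ∑ b : Fin m → ZMod 4, f (∑ i, b i * h i)
        = ∑ b : Fin m → ZMod 4, f ((∑ i, b i * h i) + d * h i0) := by
      intro d
      refine (Fintype.sum_bijective _ (hbij d)
        (fun b => f ((∑ i, b i * h i) + d * h i0)) (fun b => f ((∑ i, b i * h i))) ?_).symm
      intro b
      show f (∑ i, b i * h i + d * h i0) = f (∑ i, (Function.update b i0 (b i0 + d)) i * h i)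
      rw [hL d b]
    calc 4 * ∑ b : Fin m → ZMod 4, f (∑ i, b i * h i)
        = ∑ d : ZMod 4, ∑ b : Fin m → ZMod 4, f (∑ i, b i * h i) := by
          simp [Finset.sum_const]
      _ = ∑ d : ZMod 4, ∑ b : Fin m → ZMod 4, f ((∑ i, b i * h i) + d * h i0) := by
          exact Finset.sum_congr rfl fun d _ => e1 d
      _ = ∑ b : Fin m → ZMod 4, ∑ d : ZMod 4, f ((∑ i, b i * h i) + d * h i0) :=
          Finset.sum_comm
      _ ≤ ∑ _b : Fin m → ZMod 4, T := by
          apply Finset.sum_le_sum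
          intro b _
          exact hT (∑ i, b i * h i)
      _ = 4 ^ m * T := by simp [Finset.sum_const, Fintype.card_fun]
  have h4 : 4 * 4 ^ (m - 1) = 4 ^ m := by
    rw [← pow_succ', Nat.sub_add_cancel hm]
  refine Nat.le_of_mul_le_mul_left ?_ (show 0 < 4 by norm_num)
  calc 4 * ∑ b : Fin m → ZMod 4, f (∑ i, b i * h i) ≤ 4 ^ m * T := hmain
    _ = 4 * (4 ^ (m - 1) * T) := by rw [← h4, mul_assoc]

abbrev Kt (m r u : ℕ) := {v : Fin (m + r) → ZMod 4 // ∃ i : Fin (m + r), (i : ℕ) < (m + r) - u ∧ v i ≠ 0}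
abbrev Rt (r u : ℕ) := {v : Fin r → ZMod 4 // ∃ i : Fin r, (i : ℕ) < r - u ∧ v i ≠ 0}

lemma res_mem (m r u : ℕ) (v : Kt m r u) (hv : ∀ i : Fin m, v.1 (Fin.castAdd r i) = 0) :
    ∃ j : Fin r, (j : ℕ) < r - u ∧ v.1 (Fin.natAdd m j) ≠ 0 := by
  obtain ⟨i, hi, hne⟩ := v.2
  have him : m ≤ (i : ℕ) := by
    by_contra hlt
    push_neg at hlt
    apply hne
    have h0 := hv ⟨(i : ℕ), hlt⟩
    have he : Fin.castAdd r (⟨(i : ℕ), hlt⟩ : Fin m) = i := by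
      apply Fin.ext
      simp
    rwa [he] at h0
  have hir : (i : ℕ) - m < r := by
    have := i.isLt
    omega
  refine ⟨⟨(i : ℕ) - m, hir⟩, by simp; omega, ?_⟩
  have he : Fin.natAdd m (⟨(i : ℕ) - m, hir⟩ : Fin r) = i := by
    apply Fin.ext
    simp
    omega
  rwa [he]

def resCol (m r u : ℕ) (v : Kt m r u) (hv : ∀ i : Fin m, v.1 (Fin.castAdd r i) = 0) : Rt r u :=
  ⟨fun j => v.1 (Fin.natAdd m j), res_mem m r u v hv⟩

def liftCol (m r u : ℕ) (w : Rt r u) : Kt m r u := by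
  refine ⟨Fin.append 0 w.1, ?_⟩
  obtain ⟨i, hi, hne⟩ := w.2
  refine ⟨Fin.natAdd m i, ?_, ?_⟩
  · simp only [Fin.coe_natAdd]
    omega
  · simpa using hne

lemma lift_res (m r u : ℕ) (v : Kt m r u) (hv : ∀ i : Fin m, v.1 (Fin.castAdd r i) = 0) :
    liftCol m r u (resCol m r u v hv) = v := by
  apply Subtype.ext
  funext i
  refine Fin.addCases (fun i0 => ?_) (fun j0 => ?_) i
  · show (Fin.append (0 : Fin m → ZMod 4) _) (Fin.castAdd r i0) = v.1 (Fin.castAdd r i0)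
    rw [hv i0]
    simp
  · show (Fin.append (0 : Fin m → ZMod 4) _) (Fin.natAdd m j0) = v.1 (Fin.natAdd m j0)
    simp [resCol]


lemma cardW_P (m r : ℕ) : (Finset.univ.filter
    (fun w : Fin (m + r) → ZMod 4 => ∀ i : Fin m, w (Fin.castAdd r i) = 0)).card = 4 ^ r := by
  classical
  rw [show (4 : ℕ) ^ r = Fintype.card (Fin r → ZMod 4) by simp [Fintype.card_fun],
    ← Finset.card_univ]
  refine Finset.card_bij' (fun w _ => fun j => w (Fin.natAdd m j))
    (fun g _ => Fin.append (0 : Fin m → ZMod 4) g) ?hi ?hj ?left ?right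
  case hi => intro w hw; exact Finset.mem_univ _
  case hj =>
    intro g hg
    rw [Finset.mem_filter]
    exact ⟨Finset.mem_univ _, fun i => by simp⟩
  case left =>
    intro w hw
    funext i
    refine Fin.addCases (fun i0 => ?_) (fun j0 => ?_) i
    · show (Fin.append (0 : Fin m → ZMod 4) _) (Fin.castAdd r i0) = w (Fin.castAdd r i0)
      rw [(Finset.mem_filter.mp hw).2 i0]
      simp
    · show (Fin.append (0 : Fin m → ZMod 4) _) (Fin.natAdd m j0) = w (Fin.natAdd m j0)
      simp
  case right =>
    intro g hg
    funext j
    show (Fin.append (0 : Fin m → ZMod 4) _) (Fin.natAdd m j) = g j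
    simp

lemma cardW_negP (m r : ℕ) : (Finset.univ.filter
    (fun w : Fin (m + r) → ZMod 4 => ¬ ∀ i : Fin m, w (Fin.castAdd r i) = 0)).card
    = 4 ^ (m + r) - 4 ^ r := by
  classical
  have h := Finset.card_filter_add_card_filter_not
    (s := (Finset.univ : Finset (Fin (m + r) → ZMod 4)))
    (fun w => ∀ i : Fin m, w (Fin.castAdd r i) = 0)
  rw [cardW_P, Finset.card_univ, show Fintype.card (Fin (m + r) → ZMod 4) = 4 ^ (m + r)
    by simp [Fintype.card_fun]] at h
  exact Nat.eq_sub_of_add_eq' h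

lemma cardW_twoAll (m r : ℕ) : (Finset.univ.filter
    (fun w : Fin (m + r) → ZMod 4 => ∀ i : Fin m,
      w (Fin.castAdd r i) = 0 ∨ w (Fin.castAdd r i) = 2)).card = 2 ^ m * 4 ^ r := by
  classical
  rw [show (2 : ℕ) ^ m * 4 ^ r = Fintype.card ((Fin m → Bool) × (Fin r → ZMod 4)) by
      simp [Fintype.card_fun], ← Finset.card_univ]
  refine Finset.card_bij'
    (fun w _ => ((fun i => decide (w (Fin.castAdd r i) = 2)), fun j => w (Fin.natAdd m j)))
    (fun p _ => Fin.append (fun i => if p.1 i then (2 : ZMod 4) else 0) p.2) ?hi ?hj ?left ?right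
  case hi => intro w hw; exact Finset.mem_univ _
  case hj =>
    intro p hp
    rw [Finset.mem_filter]
    refine ⟨Finset.mem_univ _, fun i => ?_⟩
    simp only [Fin.append_left]
    by_cases h : p.1 i
    · right; rw [if_pos h]
    · left; rw [if_neg h]
  case left =>
    intro w hw
    funext i
    refine Fin.addCases (fun i0 => ?_) (fun j0 => ?_) i
    · simp only [Fin.append_left]
      rcases (Finset.mem_filter.mp hw).2 i0 with h0 | h2
      · simp only [h0]
        decide
      · simp only [h2]
        decide
    · simp only [Fin.append_right]
  case right =>
    intro p hp
    obtain ⟨s, g⟩ := p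
    refine Prod.ext ?_ ?_
    · funext i
      show decide ((Fin.append (fun i => if s i then (2 : ZMod 4) else 0) g) (Fin.castAdd r i) = 2)
        = s i
      rw [Fin.append_left]
      by_cases h : s i
      · rw [if_pos h, h]; decide
      · rw [if_neg h]
        have hf : s i = false := by revert h; cases s i <;> simp
        rw [hf]
        decide
    · funext j
      show (Fin.append (fun i => if s i then (2 : ZMod 4) else 0) g) (Fin.natAdd m j) = g j
      rw [Fin.append_right]

lemma cardW_two (m r : ℕ) : (Finset.univ.filter
    (fun w : Fin (m + r) → ZMod 4 =>
      (∀ i : Fin m, w (Fin.castAdd r i) = 0 ∨ w (Fin.castAdd r i) = 2)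
      ∧ ¬ ∀ i : Fin m, w (Fin.castAdd r i) = 0)).card = 2 ^ m * 4 ^ r - 4 ^ r := by
  classical
  have h := Finset.card_filter_add_card_filter_not
    (s := Finset.univ.filter (fun w : Fin (m + r) → ZMod 4 => ∀ i : Fin m,
      w (Fin.castAdd r i) = 0 ∨ w (Fin.castAdd r i) = 2))
    (fun w => ∀ i : Fin m, w (Fin.castAdd r i) = 0)
  rw [Finset.filter_filter, Finset.filter_filter, cardW_twoAll] at h
  have h1 : (Finset.univ.filter (fun w : Fin (m + r) → ZMod 4 =>
      (∀ i : Fin m, w (Fin.castAdd r i) = 0 ∨ w (Fin.castAdd r i) = 2)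
      ∧ ∀ i : Fin m, w (Fin.castAdd r i) = 0)).card = 4 ^ r := by
    rw [← cardW_P m r]
    congr 1
    apply Finset.filter_congr
    intro w _
    constructor
    · exact fun hw => hw.2
    · exact fun hw => ⟨fun i => Or.inl (hw i), hw⟩
  rw [h1] at h
  exact Nat.eq_sub_of_add_eq' h

lemma main_est (m r u : ℕ) (wt : ZMod 4 → ℕ) (TU TD : ℕ)
    (hU : ∀ y e : ZMod 4, (e = 1 ∨ e = 3) → ∑ c : ZMod 4, wt (y - c * e) ≤ TU)
    (hT2 : ∀ y : ZMod 4, ∑ c : ZMod 4, wt (y - c * 2) ≤ TU + TD)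
    (x : Kt m r u → ZMod 4) (a' : Fin r → ZMod 4) :
    ∑ b : Fin m → ZMod 4, ∑ v : Kt m r u, wt (x v - ∑ i, (Fin.append b a') i * v.1 i)
      ≤ 4 ^ m * (∑ w : Rt r u, wt (x (liftCol m r u w) - ∑ j, a' j * w.1 j))
        + (4 ^ (m + r) - 4 ^ r) * (4 ^ (m - 1) * TU)
        + (2 ^ m * 4 ^ r - 4 ^ r) * (4 ^ (m - 1) * TD) := by
  classical
  have hcardb : Fintype.card (Fin m → ZMod 4) = 4 ^ m := by simp [Fintype.card_fun]
  have hform : ∀ (b : Fin m → ZMod 4) (v : Kt m r u),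
      wt (x v - ∑ i, (Fin.append b a') i * v.1 i)
        = wt ((x v - ∑ j : Fin r, a' j * v.1 (Fin.natAdd m j))
            - ∑ i : Fin m, b i * v.1 (Fin.castAdd r i)) := by
    intro b v
    congr 1
    rw [Fin.sum_univ_add]
    simp only [Fin.append_left, Fin.append_right]
    ring
  have hswap : ∑ b : Fin m → ZMod 4, ∑ v : Kt m r u, wt (x v - ∑ i, (Fin.append b a') i * v.1 i)
      = ∑ v : Kt m r u, ∑ b : Fin m → ZMod 4,
          wt ((x v - ∑ j : Fin r, a' j * v.1 (Fin.natAdd m j))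
            - ∑ i : Fin m, b i * v.1 (Fin.castAdd r i)) := by
    rw [Finset.sum_comm]
    exact Finset.sum_congr rfl fun v _ => Finset.sum_congr rfl fun b _ => hform b v
  rw [hswap]
  rw [← Finset.sum_filter_add_sum_filter_not Finset.univ
    (fun v : Kt m r u => ∀ i : Fin m, v.1 (Fin.castAdd r i) = 0)]
  -- Part A : head-zero columns
  have hA : ∑ v ∈ Finset.univ.filter (fun v : Kt m r u => ∀ i : Fin m, v.1 (Fin.castAdd r i) = 0),
        ∑ b : Fin m → ZMod 4,
          wt ((x v - ∑ j : Fin r, a' j * v.1 (Fin.natAdd m j))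
            - ∑ i : Fin m, b i * v.1 (Fin.castAdd r i))
      = 4 ^ m * ∑ w : Rt r u, wt (x (liftCol m r u w) - ∑ j, a' j * w.1 j) := by
    have h1 : ∀ v ∈ Finset.univ.filter
        (fun v : Kt m r u => ∀ i : Fin m, v.1 (Fin.castAdd r i) = 0),
        (∑ b : Fin m → ZMod 4,
          wt ((x v - ∑ j : Fin r, a' j * v.1 (Fin.natAdd m j))
            - ∑ i : Fin m, b i * v.1 (Fin.castAdd r i)))
        = 4 ^ m * wt (x v - ∑ j : Fin r, a' j * v.1 (Fin.natAdd m j)) := by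
      intro v hv
      rw [Finset.mem_filter] at hv
      have h2 : ∀ b : Fin m → ZMod 4, wt ((x v - ∑ j : Fin r, a' j * v.1 (Fin.natAdd m j))
            - ∑ i : Fin m, b i * v.1 (Fin.castAdd r i))
          = wt (x v - ∑ j : Fin r, a' j * v.1 (Fin.natAdd m j)) := by
        intro b
        have hz : (∑ i : Fin m, b i * v.1 (Fin.castAdd r i)) = 0 :=
          Finset.sum_eq_zero fun i _ => by rw [hv.2 i, mul_zero]
        rw [hz, sub_zero]
      rw [Finset.sum_congr rfl fun b _ => h2 b, Finset.sum_const, Finset.card_univ, hcardb,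
        smul_eq_mul]
    rw [Finset.sum_congr rfl h1, ← Finset.mul_sum]
    congr 1
    refine Finset.sum_bij' (fun v hv => resCol m r u v ((Finset.mem_filter.mp hv).2))
      (fun w _ => liftCol m r u w) ?_ ?_ ?_ ?_ ?_
    · intro v hv
      exact Finset.mem_univ _
    · intro w hw
      rw [Finset.mem_filter]
      refine ⟨Finset.mem_univ _, ?_⟩
      intro i
      show (Fin.append (0 : Fin m → ZMod 4) w.1) (Fin.castAdd r i) = 0
      simp
    · intro v hv
      exact lift_res m r u v ((Finset.mem_filter.mp hv).2)
    · intro w hw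
      apply Subtype.ext
      funext j
      show (Fin.append (0 : Fin m → ZMod 4) w.1) (Fin.natAdd m j) = w.1 j
      simp
    · intro v hv
      rw [lift_res m r u v ((Finset.mem_filter.mp hv).2)]
      rfl
  rw [hA]
  have hc1 : (Finset.univ.filter
      (fun v : Kt m r u => ¬ ∀ i : Fin m, v.1 (Fin.castAdd r i) = 0)).card
      ≤ 4 ^ (m + r) - 4 ^ r := by
    rw [← cardW_negP m r]
    apply Finset.card_le_card_of_injOn (fun v => v.1)
    · intro v hv
      rw [Finset.mem_coe, Finset.mem_filter] at hv ⊢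
      exact ⟨Finset.mem_univ _, hv.2⟩
    · exact fun a _ b _ h => Subtype.ext h
  have hc2 : ((Finset.univ.filter
      (fun v : Kt m r u => ¬ ∀ i : Fin m, v.1 (Fin.castAdd r i) = 0)).filter
      (fun v : Kt m r u => ∀ i : Fin m,
        v.1 (Fin.castAdd r i) = 0 ∨ v.1 (Fin.castAdd r i) = 2)).card
      ≤ 2 ^ m * 4 ^ r - 4 ^ r := by
    rw [← cardW_two m r]
    apply Finset.card_le_card_of_injOn (fun v => v.1)
    · intro v hv
      simp only [Finset.mem_coe, Finset.mem_filter, Finset.mem_univ, true_and] at hv ⊢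
      exact ⟨hv.2, hv.1⟩
    · exact fun a _ b _ h => Subtype.ext h
  have hcol : ∀ v ∈ Finset.univ.filter
      (fun v : Kt m r u => ¬ ∀ i : Fin m, v.1 (Fin.castAdd r i) = 0),
      (∑ b : Fin m → ZMod 4,
        wt ((x v - ∑ j : Fin r, a' j * v.1 (Fin.natAdd m j))
          - ∑ i : Fin m, b i * v.1 (Fin.castAdd r i)))
      ≤ 4 ^ (m - 1) * TU + (if (∀ i : Fin m,
          v.1 (Fin.castAdd r i) = 0 ∨ v.1 (Fin.castAdd r i) = 2)
        then 4 ^ (m - 1) * TD else 0) := by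
    intro v hv
    have hnP := (Finset.mem_filter.mp hv).2
    push_neg at hnP
    by_cases hQv : ∀ i : Fin m, v.1 (Fin.castAdd r i) = 0 ∨ v.1 (Fin.castAdd r i) = 2
    · obtain ⟨i0, hne⟩ := hnP
      have h2 : v.1 (Fin.castAdd r i0) = 2 := by
        rcases hQv i0 with h | h
        · exact absurd h hne
        · exact h
      rw [if_pos hQv, ← Nat.mul_add]
      refine key m (fun z => wt ((x v - ∑ j : Fin r, a' j * v.1 (Fin.natAdd m j)) - z))
        (fun i => v.1 (Fin.castAdd r i)) i0 (TU + TD) ?_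
      intro t
      have hre : ∀ c : ZMod 4,
          wt ((x v - ∑ j : Fin r, a' j * v.1 (Fin.natAdd m j)) - (t + c * v.1 (Fin.castAdd r i0)))
          = wt (((x v - ∑ j : Fin r, a' j * v.1 (Fin.natAdd m j)) - t) - c * 2) := by
        intro c
        rw [h2]
        congr 1
        ring
      calc ∑ c : ZMod 4, wt ((x v - ∑ j : Fin r, a' j * v.1 (Fin.natAdd m j))
              - (t + c * v.1 (Fin.castAdd r i0)))
          = ∑ c : ZMod 4, wt (((x v - ∑ j : Fin r, a' j * v.1 (Fin.natAdd m j)) - t) - c * 2) :=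
            Finset.sum_congr rfl fun c _ => hre c
        _ ≤ TU + TD := hT2 _
    · push_neg at hQv
      obtain ⟨i1, hb0, hb2⟩ := hQv
      have he : v.1 (Fin.castAdd r i1) = 1 ∨ v.1 (Fin.castAdd r i1) = 3 := by
        rcases zmod4_cases (v.1 (Fin.castAdd r i1)) with h | h | h | h
        · exact absurd h hb0
        · exact Or.inl h
        · exact absurd h hb2
        · exact Or.inr h
      rw [if_neg (by push_neg; exact ⟨i1, hb0, hb2⟩), Nat.add_zero]
      refine key m (fun z => wt ((x v - ∑ j : Fin r, a' j * v.1 (Fin.natAdd m j)) - z))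
        (fun i => v.1 (Fin.castAdd r i)) i1 TU ?_
      intro t
      have hre : ∀ c : ZMod 4,
          wt ((x v - ∑ j : Fin r, a' j * v.1 (Fin.natAdd m j)) - (t + c * v.1 (Fin.castAdd r i1)))
          = wt (((x v - ∑ j : Fin r, a' j * v.1 (Fin.natAdd m j)) - t)
              - c * v.1 (Fin.castAdd r i1)) := by
        intro c
        congr 1
        ring
      calc ∑ c : ZMod 4, wt ((x v - ∑ j : Fin r, a' j * v.1 (Fin.natAdd m j))
              - (t + c * v.1 (Fin.castAdd r i1)))
          = ∑ c : ZMod 4, wt (((x v - ∑ j : Fin r, a' j * v.1 (Fin.natAdd m j)) - t)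
              - c * v.1 (Fin.castAdd r i1)) := Finset.sum_congr rfl fun c _ => hre c
        _ ≤ TU := hU _ _ he
  have hB : ∑ v ∈ Finset.univ.filter
      (fun v : Kt m r u => ¬ ∀ i : Fin m, v.1 (Fin.castAdd r i) = 0),
      ∑ b : Fin m → ZMod 4,
        wt ((x v - ∑ j : Fin r, a' j * v.1 (Fin.natAdd m j))
          - ∑ i : Fin m, b i * v.1 (Fin.castAdd r i))
      ≤ (4 ^ (m + r) - 4 ^ r) * (4 ^ (m - 1) * TU)
        + (2 ^ m * 4 ^ r - 4 ^ r) * (4 ^ (m - 1) * TD) := by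
    refine le_trans (Finset.sum_le_sum hcol) ?_
    rw [Finset.sum_add_distrib, Finset.sum_const, smul_eq_mul, ← Finset.sum_filter,
      Finset.sum_const, smul_eq_mul]
    exact Nat.add_le_add (Nat.mul_le_mul_right _ hc1) (Nat.mul_le_mul_right _ hc2)
  rw [add_assoc]
  exact Nat.add_le_add_left hB _


lemma arith_lee (m r : ℕ) :
    (4 ^ (m + r) - 4 ^ r) * (4 ^ (m - 1) * 4) + (2 ^ m * 4 ^ r - 4 ^ r) * (4 ^ (m - 1) * 0)
      ≤ 4 ^ m * (4 ^ (m + r) - 4 ^ r) := by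
  rcases m with _ | n
  · simp
  · rw [mul_zero, mul_zero, add_zero, Nat.succ_sub_one]
    have h4 : (4 : ℕ) ^ n * 4 = 4 ^ (n + 1) := by rw [pow_succ]
    rw [h4, mul_comm]

lemma arith_eucl (m r D : ℕ) :
    6 * (4 ^ m * D + (4 ^ (m + r) - 4 ^ r) * (4 ^ (m - 1) * 6)
        + (2 ^ m * 4 ^ r - 4 ^ r) * (4 ^ (m - 1) * 2))
      ≤ 4 ^ m * (6 * D + 11 * (4 ^ (m + r) - 4 ^ r)) := by
  rcases m with _ | n
  · simp [mul_add]
  · have hd1 : 1 ≤ 2 ^ n := Nat.one_le_two_pow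
    have hc : (4 : ℕ) ^ n = 2 ^ n * 2 ^ n := by
      rw [show (4 : ℕ) = 2 * 2 from rfl, mul_pow]
    have hdc : 2 ^ n ≤ 4 ^ n := by
      rw [hc]
      exact Nat.le_mul_of_pos_left _ hd1
    have hpow1 : (4 : ℕ) ^ (n + 1 + r) = 4 * 4 ^ n * 4 ^ r := by
      rw [pow_add, pow_succ, mul_comm (4 ^ n) 4]
    have hpow2 : (4 : ℕ) ^ (n + 1) = 4 * 4 ^ n := by rw [pow_succ, mul_comm]
    have hpow3 : (2 : ℕ) ^ (n + 1) = 2 * 2 ^ n := by rw [pow_succ, mul_comm]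
    rw [Nat.succ_sub_one, hpow1, hpow2, hpow3]
    -- reduce to a polynomial inequality
    have hkey : 12 * ((2 * 2 ^ n) * 4 ^ r - 4 ^ r) ≤ 8 * (4 * 4 ^ n * 4 ^ r - 4 ^ r) := by
      have e1 : (2 * 2 ^ n) * 4 ^ r - 4 ^ r = (2 * 2 ^ n - 1) * 4 ^ r := by
        rw [Nat.sub_mul, one_mul]
      have e2 : 4 * 4 ^ n * 4 ^ r - 4 ^ r = (4 * 4 ^ n - 1) * 4 ^ r := by
        rw [Nat.sub_mul, one_mul]
      rw [e1, e2, ← mul_assoc, ← mul_assoc]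
      apply Nat.mul_le_mul_right
      have : 2 ^ n ≤ 2 ^ n * 2 ^ n := Nat.le_mul_of_pos_left _ hd1
      rw [hc] at *
      omega
    nlinarith [hkey, Nat.zero_le (4 ^ n), Nat.zero_le D,
      Nat.zero_le (4 * 4 ^ n * 4 ^ r - 4 ^ r)]

lemma euclWt_le (z : ZMod 4) : euclWt z ≤ 4 := by revert z; decide

lemma covRadEucl_helpers {ι : Type*} [Fintype ι] (C : Set (ι → ZMod 4)) (c₀ : ι → ZMod 4)
    (hc₀ : c₀ ∈ C) :
    (Set.range fun y : ι → ZMod 4 => sInf (dEucl y '' C)).Nonempty ∧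
    BddAbove (Set.range fun y : ι → ZMod 4 => sInf (dEucl y '' C)) := by
  refine ⟨Set.range_nonempty _, ⟨4 * Fintype.card ι, ?_⟩⟩
  rintro _ ⟨y, rfl⟩
  refine (Nat.sInf_le (Set.mem_image_of_mem _ hc₀)).trans ?_
  calc dEucl y c₀ ≤ ∑ _i : ι, 4 := Finset.sum_le_sum fun i _ => euclWt_le _
    _ = 4 * Fintype.card ι := by simp [Finset.sum_const, mul_comm]

lemma sInf_le_covRadEucl {ι : Type*} [Fintype ι] (C : Set (ι → ZMod 4)) (c₀ : ι → ZMod 4)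
    (hc₀ : c₀ ∈ C) (x : ι → ZMod 4) : sInf (dEucl x '' C) ≤ covRadEucl C :=
  le_csSup (covRadEucl_helpers C c₀ hc₀).2 ⟨x, rfl⟩

theorem stmt18 (k u r : ℕ) (hu : 1 ≤ u) (huk : u ≤ k - 1) (hur : u < r) (hrk : r ≤ k) :
    covRadLee (macDonaldAlpha k u) ≤ 4 ^ k - 4 ^ r + covRadLee (macDonaldAlpha r u) ∧
      6 * covRadEucl (macDonaldAlpha k u) ≤
        11 * (4 ^ k - 4 ^ r) + 6 * covRadEucl (macDonaldAlpha r u) := by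
  classical
  obtain ⟨m, rfl⟩ : ∃ m, k = m + r := ⟨k - r, (Nat.sub_add_cancel hrk).symm⟩
  have hcardb : Fintype.card (Fin m → ZMod 4) = 4 ^ m := by simp [Fintype.card_fun]
  have hzero_r : (fun v : Rt r u => ∑ j, (0 : Fin r → ZMod 4) j * v.1 j)
      ∈ macDonaldAlpha r u := ⟨0, rfl⟩
  constructor
  · -- Lee part
    apply covRad_le_of
    intro x
    have hne : (dLee (fun w : Rt r u => x (liftCol m r u w)) '' macDonaldAlpha r u).Nonempty :=
      ⟨_, Set.mem_image_of_mem _ hzero_r⟩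
    obtain ⟨c', hc'mem, hval⟩ := Nat.sInf_mem hne
    obtain ⟨a', rfl⟩ := hc'mem
    have hme : ∑ b : Fin m → ZMod 4, dLee x (fun v => ∑ i, Fin.append b a' i * v.1 i)
        ≤ 4 ^ m * dLee (fun w : Rt r u => x (liftCol m r u w)) (fun w => ∑ j, a' j * w.1 j)
          + (4 ^ (m + r) - 4 ^ r) * (4 ^ (m - 1) * 4)
          + (2 ^ m * 4 ^ r - 4 ^ r) * (4 ^ (m - 1) * 0) :=
      main_est m r u leeWt 4 0 lee_unit lee_two x a'
    have hS2 : ∑ b : Fin m → ZMod 4, dLee x (fun v => ∑ i, Fin.append b a' i * v.1 i)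
        ≤ ∑ _b : Fin m → ZMod 4,
          (dLee (fun w : Rt r u => x (liftCol m r u w)) (fun w => ∑ j, a' j * w.1 j)
            + (4 ^ (m + r) - 4 ^ r)) := by
      rw [Finset.sum_const, Finset.card_univ, hcardb, smul_eq_mul, Nat.mul_add]
      refine hme.trans ?_
      rw [add_assoc]
      exact Nat.add_le_add_left (arith_lee m r) _
    obtain ⟨b, -, hb⟩ := Finset.exists_le_of_sum_le Finset.univ_nonempty hS2
    refine le_trans (Nat.sInf_le (Set.mem_image_of_mem _
      (⟨Fin.append b a', rfl⟩ : _ ∈ macDonaldAlpha (m + r) u))) ?_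
    refine hb.trans ?_
    rw [hval, Nat.add_comm]
    exact Nat.add_le_add_left (sInf_le_covRadLee _ _ hzero_r _) _
  · -- Euclidean part
    have hne_range := (covRadEucl_helpers (macDonaldAlpha (m + r) u)
      _ (⟨0, rfl⟩ : (fun v : Kt m r u => ∑ i, (0 : Fin (m + r) → ZMod 4) i * v.1 i)
        ∈ macDonaldAlpha (m + r) u))
    obtain ⟨x, hx⟩ := Nat.sSup_mem hne_range.1 hne_range.2
    rw [show covRadEucl (macDonaldAlpha (m + r) u)
      = sInf (dEucl x '' macDonaldAlpha (m + r) u) from hx.symm]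
    have hne : (dEucl (fun w : Rt r u => x (liftCol m r u w)) '' macDonaldAlpha r u).Nonempty :=
      ⟨_, Set.mem_image_of_mem _ hzero_r⟩
    obtain ⟨c', hc'mem, hval⟩ := Nat.sInf_mem hne
    obtain ⟨a', rfl⟩ := hc'mem
    have hme : ∑ b : Fin m → ZMod 4, dEucl x (fun v => ∑ i, Fin.append b a' i * v.1 i)
        ≤ 4 ^ m * dEucl (fun w : Rt r u => x (liftCol m r u w)) (fun w => ∑ j, a' j * w.1 j)
          + (4 ^ (m + r) - 4 ^ r) * (4 ^ (m - 1) * 6)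
          + (2 ^ m * 4 ^ r - 4 ^ r) * (4 ^ (m - 1) * 2) :=
      main_est m r u euclWt 6 2 eucl_unit eucl_two x a'
    have hS2 : ∑ b : Fin m → ZMod 4, 6 * dEucl x (fun v => ∑ i, Fin.append b a' i * v.1 i)
        ≤ ∑ _b : Fin m → ZMod 4,
          (6 * dEucl (fun w : Rt r u => x (liftCol m r u w)) (fun w => ∑ j, a' j * w.1 j)
            + 11 * (4 ^ (m + r) - 4 ^ r)) := by
      rw [Finset.sum_const, Finset.card_univ, hcardb, smul_eq_mul, ← Finset.mul_sum]
      exact le_trans (Nat.mul_le_mul_left 6 hme) (arith_eucl m r _)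
    obtain ⟨b, -, hb⟩ := Finset.exists_le_of_sum_le Finset.univ_nonempty hS2
    refine le_trans (Nat.mul_le_mul_left 6 (Nat.sInf_le (Set.mem_image_of_mem _
      (⟨Fin.append b a', rfl⟩ : _ ∈ macDonaldAlpha (m + r) u)))) ?_
    refine hb.trans ?_
    rw [hval, Nat.add_comm]
    exact Nat.add_le_add_left
      (Nat.mul_le_mul_left 6 (sInf_le_covRadEucl _ _ hzero_r _)) _
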